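/- Let a > 0, M ≥ 1, and let g_0,…,g_{M−1}, θ_0,…,θ_{M−1} be real numbers satisfying the compatibility conditions Σ_k g_k e^{−iθ_k} = 0 and Σ_k g_k e^{−2iθ_k} = 0. Let r > 0 and θ ∈ ℝ be such that a(2πj + θ_k − θ) + ln r ≠ 0 for every j ∈ ℤ and every k (i.e. the point r e^{iθ} lies off all the spirals). Then the denominators r − e^{(a+i)σ + i(θ_k−θ)} never vanish for σ ∈ ℝ, and the function f(σ) := Σ_{k=0}^{M−1} g_k e^{2aσ}/( r − e^{(a+i)σ + i(θ_k−θ)} ) is Bochner integrable on ℝ. -/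

import Mathlib

open MeasureTheory Set Complex

private lemma exp_mul_integrableOn_Iic {b : ℝ} (hb : 0 < b) (T : ℝ) :
    IntegrableOn (fun x : ℝ => Real.exp (b * x)) (Iic T) := by
  have A : MeasurableEmbedding fun x : ℝ => -x :=
    (Homeomorph.neg ℝ).isClosedEmbedding.measurableEmbedding
  have h1 := A.restrict_map (μ := (volume : Measure ℝ)) (s := Iic T)
  rw [Measure.map_neg_eq_self, show (fun x : ℝ => -x) ⁻¹' (Iic T) = Ici (-T) by
    ext x; simp] at h1
  rw [IntegrableOn, h1, A.integrable_map_iff]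
  have : ((fun x : ℝ => Real.exp (b * x)) ∘ fun x : ℝ => -x)
      = fun x : ℝ => Real.exp (-b * x) := by ext x; simp [Function.comp]
  rw [this, ← IntegrableOn, integrableOn_Ici_iff_integrableOn_Ioi]
  exact exp_neg_integrableOn_Ioi (-T) hb

private lemma alg_identity (gg rr e x : ℂ) (hx : x ≠ 0) (hy : rr - x ≠ 0) :
    gg * e / (rr - x) = gg * (rr ^ 2 * e / (x ^ 2 * (rr - x))) - gg * (e / x)
      - rr * gg * (e / x ^ 2) := by
  have h5 : rr * x ^ 5 - x ^ 6 ≠ 0 := by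
    have h : rr * x ^ 5 - x ^ 6 = x ^ 5 * (rr - x) := by ring
    rw [h]; exact mul_ne_zero (pow_ne_zero 5 hx) hy
  field_simp [h5]
  ring

/-- Let `a > 0`, `M ≥ 1`, and let `g_k, θ_k` be real numbers satisfying the
compatibility conditions `Σ_k g_k e^{−iθ_k} = 0` and `Σ_k g_k e^{−2iθ_k} = 0`.  Let `r > 0`
and `θ ∈ ℝ` be such that `a(2πj + θ_k − θ) + ln r ≠ 0` for every `j ∈ ℤ` and every `k` (i.e.
the point `re^{iθ}` lies off all the spirals).  Then the denominators
`r − e^{(a+i)σ+i(θ_k−θ)}` never vanish for `σ ∈ ℝ`, and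
`f(σ) := Σ_k g_k e^{2aσ}/(r − e^{(a+i)σ+i(θ_k−θ)})` is Bochner integrable on `ℝ`. -/
theorem integrand_integrable (a : ℝ) (ha : 0 < a) (M : ℕ) (hM : 1 ≤ M)
    (g θs : Fin M → ℝ)
    (hc1 : ∑ k : Fin M, (g k : ℂ) * Complex.exp (-Complex.I * (θs k : ℂ)) = 0)
    (hc2 : ∑ k : Fin M, (g k : ℂ) * Complex.exp (-2 * Complex.I * (θs k : ℂ)) = 0)
    (r θ : ℝ) (hr : 0 < r)
    (hoff : ∀ (j : ℤ) (k : Fin M), a * (2 * Real.pi * (j : ℝ) + θs k - θ) + Real.log r ≠ 0) :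
    (∀ (k : Fin M) (σ : ℝ),
      (r : ℂ) - Complex.exp (((a : ℂ) + Complex.I) * (σ : ℂ) +
        Complex.I * ((θs k : ℂ) - (θ : ℂ))) ≠ 0) ∧
    MeasureTheory.Integrable
      (fun σ : ℝ => ∑ k : Fin M, (g k : ℂ) * Complex.exp (2 * (a : ℂ) * (σ : ℂ)) /
        ((r : ℂ) - Complex.exp (((a : ℂ) + Complex.I) * (σ : ℂ) +
          Complex.I * ((θs k : ℂ) - (θ : ℂ))))) := by
  set E : Fin M → ℝ → ℂ := fun k σ =>
    Complex.exp (((a : ℂ) + Complex.I) * (σ : ℂ) + Complex.I * ((θs k : ℂ) - (θ : ℂ)))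
    with hEdef
  -- Part 1 : the denominators never vanish
  have hne : ∀ (k : Fin M) (σ : ℝ), (r : ℂ) - E k σ ≠ 0 := by
    intro k σ h
    rw [sub_eq_zero] at h
    have hz : ((a : ℂ) + Complex.I) * (σ : ℂ) + Complex.I * ((θs k : ℂ) - (θ : ℂ))
        = ((a * σ : ℝ) : ℂ) + ((σ + θs k - θ : ℝ) : ℂ) * Complex.I := by push_cast; ring
    rw [hEdef] at h
    simp only at h
    rw [hz, Complex.exp_add] at h
    have hmod : r = Real.exp (a * σ) := by
      have h2 := congrArg (fun z : ℂ => ‖z‖) h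
      rw [norm_mul, Complex.norm_exp_ofReal, Complex.norm_exp_ofReal_mul_I, mul_one,
        Complex.norm_real, Real.norm_eq_abs, abs_of_pos hr] at h2
      exact h2
    have hlog : a * σ = Real.log r := by rw [hmod, Real.log_exp]
    rw [← Complex.ofReal_exp, ← hmod] at h
    have hexp1 : Complex.exp (((σ + θs k - θ : ℝ) : ℂ) * Complex.I) = 1 := by
      have := mul_left_cancel₀ (c := Complex.exp (((σ + θs k - θ : ℝ) : ℂ) * Complex.I))
        (b := (1 : ℂ)) (Complex.ofReal_ne_zero.2 hr.ne') (by rw [← h, mul_one])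
      exact this.symm
    rw [Complex.exp_eq_one_iff] at hexp1
    obtain ⟨n, hn⟩ := hexp1
    have hn' : ((σ + θs k - θ : ℝ) : ℂ) * Complex.I
        = (((n : ℝ) * (2 * Real.pi) : ℝ) : ℂ) * Complex.I := by
      push_cast at hn ⊢; linear_combination hn
    have hx : (σ + θs k - θ : ℝ) = n * (2 * Real.pi) := by
      exact_mod_cast mul_right_cancel₀ Complex.I_ne_zero hn'
    refine hoff (-n) k ?_
    push_cast
    linear_combination a * hx - hlog
  refine ⟨hne, ?_⟩
  -- notation
  set F : ℝ → ℂ := fun σ => ∑ k : Fin M, (g k : ℂ) * Complex.exp (2 * (a : ℂ) * (σ : ℂ)) /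
      ((r : ℂ) - E k σ) with hFdef
  -- basic norm computations
  have hnormE : ∀ (k : Fin M) (σ : ℝ), ‖E k σ‖ = Real.exp (a * σ) := by
    intro k σ
    rw [hEdef]
    simp only
    rw [show ((a : ℂ) + Complex.I) * (σ : ℂ) + Complex.I * ((θs k : ℂ) - (θ : ℂ))
        = ((a * σ : ℝ) : ℂ) + ((σ + θs k - θ : ℝ) : ℂ) * Complex.I by push_cast; ring,
      Complex.exp_add, norm_mul,
      Complex.norm_exp_ofReal, Complex.norm_exp_ofReal_mul_I, mul_one]
  have hnorm2 : ∀ σ : ℝ, ‖Complex.exp (2 * (a : ℂ) * (σ : ℂ))‖ = Real.exp (2 * a * σ) := by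
    intro σ
    rw [show 2 * (a : ℂ) * (σ : ℂ) = ((2 * a * σ : ℝ) : ℂ) by push_cast; ring,
      Complex.norm_exp_ofReal]
  -- continuity
  have hEcont : ∀ k : Fin M, Continuous (E k) := by
    intro k
    apply Complex.continuous_exp.comp
    fun_prop
  have htermcont : ∀ k : Fin M, Continuous (fun σ : ℝ =>
      (g k : ℂ) * Complex.exp (2 * (a : ℂ) * (σ : ℂ)) / ((r : ℂ) - E k σ)) := by
    intro k
    apply Continuous.div
    · exact continuous_const.mul (Complex.continuous_exp.comp (by fun_prop))
    · exact continuous_const.sub (hEcont k)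
    · exact fun σ => hne k σ
  -- thresholds
  set T : ℝ := max 1 (Real.log (2 * r) / a) with hTdef
  set T' : ℝ := max 0 (Real.log (2 / r) / a) with hT'def
  have hT1 : (1 : ℝ) ≤ T := le_max_left _ _
  have hT'0 : (0 : ℝ) ≤ T' := le_max_left _ _
  -- lower bound on denominators for large σ
  have hlb : ∀ (k : Fin M), ∀ σ : ℝ, T ≤ σ → Real.exp (a * σ) / 2 ≤ ‖(r : ℂ) - E k σ‖ := by
    intro k σ hσ
    have h2r : 2 * r ≤ Real.exp (a * σ) := by
      have h1 : Real.log (2 * r) ≤ a * σ := by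
        have : Real.log (2 * r) / a ≤ σ := le_trans (le_max_right _ _) hσ
        calc Real.log (2 * r) = a * (Real.log (2 * r) / a) := by field_simp
        _ ≤ a * σ := by nlinarith
      calc 2 * r = Real.exp (Real.log (2 * r)) := by rw [Real.exp_log (by linarith)]
      _ ≤ Real.exp (a * σ) := Real.exp_le_exp.2 h1
    have := norm_sub_norm_le (E k σ) ((r : ℂ))
    rw [← norm_sub_rev, hnormE k σ] at this
    have hnr : ‖(r : ℂ)‖ = r := by rw [Complex.norm_real, Real.norm_eq_abs, abs_of_pos hr]
    rw [hnr] at this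
    linarith
  -- lower bound on denominators for very negative σ
  have hsb : ∀ (k : Fin M), ∀ σ : ℝ, σ ≤ -T' → r / 2 ≤ ‖(r : ℂ) - E k σ‖ := by
    intro k σ hσ
    have h2r : Real.exp (a * σ) ≤ r / 2 := by
      have h1 : a * σ ≤ Real.log (r / 2) := by
        have hl : Real.log (2 / r) / a ≤ T' := le_max_right _ _
        have hlr : Real.log (r / 2) = -Real.log (2 / r) := by
          rw [← Real.log_inv]; congr 1; field_simp
        have : σ ≤ -(Real.log (2 / r) / a) := by linarith
        rw [hlr]
        calc a * σ ≤ a * (-(Real.log (2 / r) / a)) := by nlinarith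
        _ = -Real.log (2 / r) := by field_simp [mul_comm]
      calc Real.exp (a * σ) ≤ Real.exp (Real.log (r / 2)) := Real.exp_le_exp.2 h1
      _ = r / 2 := Real.exp_log (by linarith)
    have := norm_sub_norm_le ((r : ℂ)) (E k σ)
    rw [hnormE k σ] at this
    have hnr : ‖(r : ℂ)‖ = r := by rw [Complex.norm_real, Real.norm_eq_abs, abs_of_pos hr]
    rw [hnr] at this
    linarith
  -- the rewritten form of F
  have hfeq : F = fun σ : ℝ => ∑ k : Fin M, (g k : ℂ) *
      ((r : ℂ) ^ 2 * Complex.exp (2 * (a : ℂ) * (σ : ℂ)) /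
        ((E k σ) ^ 2 * ((r : ℂ) - E k σ))) := by
    funext σ
    have key : ∀ k : Fin M, (g k : ℂ) * Complex.exp (2 * (a : ℂ) * (σ : ℂ)) / ((r : ℂ) - E k σ)
        = (g k : ℂ) * ((r : ℂ) ^ 2 * Complex.exp (2 * (a : ℂ) * (σ : ℂ)) /
            ((E k σ) ^ 2 * ((r : ℂ) - E k σ)))
          - Complex.exp (((a : ℂ) - Complex.I) * (σ : ℂ) + Complex.I * (θ : ℂ)) *
              ((g k : ℂ) * Complex.exp (-Complex.I * (θs k : ℂ)))
          - (r : ℂ) * Complex.exp (-2 * Complex.I * (σ : ℂ) + 2 * Complex.I * (θ : ℂ)) *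
              ((g k : ℂ) * Complex.exp (-2 * Complex.I * (θs k : ℂ))) := by
      intro k
      have hE0 : E k σ ≠ 0 := Complex.exp_ne_zero _
      have hrE := hne k σ
      have s1 : Complex.exp (((a : ℂ) - Complex.I) * (σ : ℂ) + Complex.I * (θ : ℂ)) *
          Complex.exp (-Complex.I * (θs k : ℂ))
          = Complex.exp (2 * (a : ℂ) * (σ : ℂ)) / E k σ := by
        rw [eq_div_iff hE0, hEdef]
        simp only
        rw [← Complex.exp_add, ← Complex.exp_add]
        congr 1; ring
      have s2 : Complex.exp (-2 * Complex.I * (σ : ℂ) + 2 * Complex.I * (θ : ℂ)) *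
          Complex.exp (-2 * Complex.I * (θs k : ℂ))
          = Complex.exp (2 * (a : ℂ) * (σ : ℂ)) / (E k σ) ^ 2 := by
        rw [eq_div_iff (pow_ne_zero 2 hE0), hEdef]
        simp only
        rw [sq, ← Complex.exp_add, ← Complex.exp_add, ← Complex.exp_add]
        congr 1; ring
      rw [show Complex.exp (((a : ℂ) - Complex.I) * (σ : ℂ) + Complex.I * (θ : ℂ)) *
          ((g k : ℂ) * Complex.exp (-Complex.I * (θs k : ℂ)))
          = (g k : ℂ) * (Complex.exp (((a : ℂ) - Complex.I) * (σ : ℂ) + Complex.I * (θ : ℂ)) *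
            Complex.exp (-Complex.I * (θs k : ℂ))) by ring, s1]
      rw [show (r : ℂ) * Complex.exp (-2 * Complex.I * (σ : ℂ) + 2 * Complex.I * (θ : ℂ)) *
          ((g k : ℂ) * Complex.exp (-2 * Complex.I * (θs k : ℂ)))
          = (r : ℂ) * (g k : ℂ) *
            (Complex.exp (-2 * Complex.I * (σ : ℂ) + 2 * Complex.I * (θ : ℂ)) *
              Complex.exp (-2 * Complex.I * (θs k : ℂ))) by ring, s2]
      exact alg_identity _ _ _ _ hE0 hrE
    rw [hFdef]
    simp only
    rw [Finset.sum_congr rfl fun k _ => key k, Finset.sum_sub_distrib, Finset.sum_sub_distrib,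
      ← Finset.mul_sum, ← Finset.mul_sum, hc1, hc2, mul_zero, mul_zero, sub_zero, sub_zero]
  -- integrability on (T, ∞)
  have hIoi : IntegrableOn F (Ioi T) := by
    rw [hfeq]
    apply integrable_finset_sum
    intro k _
    have hb : IntegrableOn (fun σ : ℝ => 2 * |g k| * r ^ 2 * Real.exp (-a * σ)) (Ioi T) :=
      (exp_neg_integrableOn_Ioi T ha).const_mul _
    refine Integrable.mono' hb ?_ ?_
    · refine Continuous.aestronglyMeasurable ?_ |>.restrict
      apply continuous_const.mul
      apply Continuous.div
      · exact continuous_const.mul (Complex.continuous_exp.comp (by fun_prop))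
      · exact ((hEcont k).pow 2).mul (continuous_const.sub (hEcont k))
      · intro σ
        exact mul_ne_zero (pow_ne_zero 2 (Complex.exp_ne_zero _)) (hne k σ)
    · rw [ae_restrict_iff' measurableSet_Ioi]
      refine ae_of_all _ fun σ hσ => ?_
      have hd := hlb k σ (le_of_lt hσ)
      have hepos : 0 < Real.exp (a * σ) := Real.exp_pos _
      have hnorm : ‖(g k : ℂ) * ((r : ℂ) ^ 2 * Complex.exp (2 * (a : ℂ) * (σ : ℂ)) /
          ((E k σ) ^ 2 * ((r : ℂ) - E k σ)))‖
          = |g k| * (r ^ 2 * Real.exp (2 * a * σ) /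
            ((Real.exp (a * σ)) ^ 2 * ‖(r : ℂ) - E k σ‖)) := by
        rw [norm_mul, norm_div, norm_mul, norm_mul, norm_pow, norm_pow, hnormE, hnorm2,
          Complex.norm_real, Complex.norm_real, Real.norm_eq_abs, Real.norm_eq_abs,
          abs_of_pos hr]
      rw [hnorm]
      have he2 : (Real.exp (a * σ)) ^ 2 = Real.exp (2 * a * σ) := by
        rw [sq, ← Real.exp_add]; ring_nf
      have hen : Real.exp (-a * σ) = (Real.exp (a * σ))⁻¹ := by
        rw [show -a * σ = -(a * σ) by ring, Real.exp_neg]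
      calc |g k| * (r ^ 2 * Real.exp (2 * a * σ) /
            ((Real.exp (a * σ)) ^ 2 * ‖(r : ℂ) - E k σ‖))
          ≤ |g k| * (r ^ 2 * Real.exp (2 * a * σ) /
            ((Real.exp (a * σ)) ^ 2 * (Real.exp (a * σ) / 2))) := by
            gcongr
          _ = 2 * |g k| * r ^ 2 * Real.exp (-a * σ) := by
            rw [he2, hen]
            field_simp
  -- integrability on (-∞, T]
  have hIic : IntegrableOn F (Iic T) := by
    rw [hFdef]
    apply integrable_finset_sum
    intro k _
    obtain ⟨x₀, hx₀K, hmin⟩ := (isCompact_Icc (a := -T') (b := T)).exists_isMinOn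
      (nonempty_Icc.2 (by linarith)) ((continuous_const.sub (hEcont k)).norm.continuousOn)
    set δ : ℝ := min ‖(r : ℂ) - E k x₀‖ (r / 2) with hδdef
    have hδpos : 0 < δ := lt_min (norm_pos_iff.2 (hne k x₀)) (by linarith)
    have hδle : ∀ σ : ℝ, σ ≤ T → δ ≤ ‖(r : ℂ) - E k σ‖ := by
      intro σ hσ
      rcases le_or_gt (-T') σ with h1 | h1
      · exact le_trans (min_le_left _ _) (isMinOn_iff.1 hmin σ ⟨h1, hσ⟩)
      · exact le_trans (min_le_right _ _) (hsb k σ h1.le)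
    have hb : IntegrableOn (fun σ : ℝ => |g k| / δ * Real.exp (2 * a * σ)) (Iic T) :=
      (exp_mul_integrableOn_Iic (by linarith) T).const_mul _
    refine Integrable.mono' hb ((htermcont k).aestronglyMeasurable.restrict) ?_
    rw [ae_restrict_iff' measurableSet_Iic]
    refine ae_of_all _ fun σ hσ => ?_
    rw [norm_div, norm_mul, hnorm2, Complex.norm_real, Real.norm_eq_abs]
    calc |g k| * Real.exp (2 * a * σ) / ‖(r : ℂ) - E k σ‖
        ≤ |g k| * Real.exp (2 * a * σ) / δ := by
          gcongr
          exact hδle σ hσ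
      _ = |g k| / δ * Real.exp (2 * a * σ) := by ring
  have hun := hIic.union hIoi
  rw [Iic_union_Ioi] at hun
  rw [← integrableOn_univ]
  exact hun
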